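/- Let p, q ≥ 1 with n = p + q + 1 and λ > 1, and let D_λ be the linear automorphism of ℝ^{p+1} × ℝ^{q+1} that multiplies the first factor by λ and the second factor by λ⁻¹. The quotient of Ω := S^n ∖ (S^p ∪ S^q) by the ℤ-action m • v := D_λ^m v / ‖D_λ^m v‖ is homeomorphic to S^p × S^q × (ℝ/ℤ), where S^p and S^q denote the unit spheres of ℝ^{p+1} and ℝ^{q+1}; in particular this quotient is a compact Hausdorff space. -/

import Mathlib

noncomputable section

open Set

/-- The great `p`-sphere `S^p`. -/
def greatSphereP (n p : ℕ) : Set (EuclideanSpace ℝ (Fin (n + 1))) :=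
  {v | ‖v‖ = 1 ∧ ∀ k : Fin (n + 1), p + 1 ≤ (k : ℕ) → v k = 0}

/-- The complementary great `q`-sphere `S^q`. -/
def greatSphereQ (n p : ℕ) : Set (EuclideanSpace ℝ (Fin (n + 1))) :=
  {v | ‖v‖ = 1 ∧ ∀ k : Fin (n + 1), (k : ℕ) < p + 1 → v k = 0}

/-- `Ω := S^n ∖ (S^p ∪ S^q)` with its subspace topology. -/
def Omega (n p : ℕ) : Set (EuclideanSpace ℝ (Fin (n + 1))) :=
  {v | ‖v‖ = 1} \ (greatSphereP n p ∪ greatSphereQ n p)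

/-- `D_λ^m`: the linear automorphism multiplying the `ℝ^{p+1}`-factor by `λ^m`
and the `ℝ^{q+1}`-factor by `λ^{-m}`. -/
def Dmap (n p : ℕ) (lam : ℝ) (m : ℤ) (v : EuclideanSpace ℝ (Fin (n + 1))) :
    EuclideanSpace ℝ (Fin (n + 1)) :=
  WithLp.toLp 2 (fun k : Fin (n + 1) => (if (k : ℕ) < p + 1 then lam ^ m else lam ^ (-m)) * v k)

/-- The projectivized action `m • v := D_λ^m v / ‖D_λ^m v‖`. -/
def normAct (n p : ℕ) (lam : ℝ) (m : ℤ) (v : EuclideanSpace ℝ (Fin (n + 1))) :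
    EuclideanSpace ℝ (Fin (n + 1)) :=
  ‖Dmap n p lam m v‖⁻¹ • Dmap n p lam m v

/-- The orbit equivalence relation of the `ℤ`-action on `Ω`. -/
def orbitRel (n p : ℕ) (lam : ℝ) (v w : ↥(Omega n p)) : Prop :=
  ∃ m : ℤ, normAct n p lam m ↑v = ↑w

/-- index equivalence -/
def idxE (p q : ℕ) : Fin (p + 1) ⊕ Fin (q + 1) ≃ Fin (p + q + 1 + 1) :=
  finSumFinEquiv.trans (finCongr (by omega))

lemma idxE_inl (p q : ℕ) (i : Fin (p + 1)) : ((idxE p q (Sum.inl i) : Fin (p+q+1+1)) : ℕ) = i := by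
  simp [idxE]

lemma idxE_inr (p q : ℕ) (j : Fin (q + 1)) : ((idxE p q (Sum.inr j) : Fin (p+q+1+1)) : ℕ) = p + 1 + j := by
  simp [idxE]

def cA (p q : ℕ) (v : EuclideanSpace ℝ (Fin (p + q + 1 + 1))) : EuclideanSpace ℝ (Fin (p + 1)) :=
  WithLp.toLp 2 (fun i => v (idxE p q (Sum.inl i)))

def cB (p q : ℕ) (v : EuclideanSpace ℝ (Fin (p + q + 1 + 1))) : EuclideanSpace ℝ (Fin (q + 1)) :=
  WithLp.toLp 2 (fun j => v (idxE p q (Sum.inr j)))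

def glue (p q : ℕ) (a : EuclideanSpace ℝ (Fin (p + 1))) (b : EuclideanSpace ℝ (Fin (q + 1))) :
    EuclideanSpace ℝ (Fin (p + q + 1 + 1)) :=
  WithLp.toLp 2 (fun k => Sum.elim a b ((idxE p q).symm k))

lemma cA_glue (p q : ℕ) (a b) : cA p q (glue p q a b) = a := by
  ext i; simp [cA, glue]

lemma cB_glue (p q : ℕ) (a b) : cB p q (glue p q a b) = b := by
  ext j; simp [cB, glue]

lemma glue_cAB (p q : ℕ) (v) : glue p q (cA p q v) (cB p q v) = v := by
  ext k
  show Sum.elim _ _ ((idxE p q).symm k) = v k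
  rcases h : (idxE p q).symm k with i | j <;>
    · have : k = idxE p q ((idxE p q).symm k) := ((idxE p q).apply_symm_apply k).symm
      rw [h] at this
      subst this
      simp [cA, cB]

lemma sq_norm_split (p q : ℕ) (v : EuclideanSpace ℝ (Fin (p + q + 1 + 1))) :
    ‖v‖ ^ 2 = ‖cA p q v‖ ^ 2 + ‖cB p q v‖ ^ 2 := by
  rw [EuclideanSpace.norm_eq, EuclideanSpace.norm_eq, EuclideanSpace.norm_eq,
    Real.sq_sqrt (by positivity), Real.sq_sqrt (by positivity), Real.sq_sqrt (by positivity)]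
  rw [← Equiv.sum_comp (idxE p q) (fun k => ‖v k‖ ^ 2), Fintype.sum_sum_type]
  rfl

lemma exists_inl (p q : ℕ) {k : Fin (p+q+1+1)} (h : (k : ℕ) < p + 1) :
    ∃ i, k = idxE p q (Sum.inl i) := by
  rcases hx : (idxE p q).symm k with i | j
  · exact ⟨i, by rw [← hx, Equiv.apply_symm_apply]⟩
  · exfalso
    have : k = idxE p q (Sum.inr j) := by rw [← hx, Equiv.apply_symm_apply]
    rw [this, idxE_inr] at h; omega

lemma exists_inr (p q : ℕ) {k : Fin (p+q+1+1)} (h : p + 1 ≤ (k : ℕ)) :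
    ∃ j, k = idxE p q (Sum.inr j) := by
  rcases hx : (idxE p q).symm k with i | j
  · exfalso
    have : k = idxE p q (Sum.inl i) := by rw [← hx, Equiv.apply_symm_apply]
    rw [this, idxE_inl] at h
    have := i.isLt; omega
  · exact ⟨j, by rw [← hx, Equiv.apply_symm_apply]⟩

lemma mem_Omega_iff (p q : ℕ) (v : EuclideanSpace ℝ (Fin (p+q+1+1))) :
    v ∈ Omega (p+q+1) p ↔ ‖v‖ = 1 ∧ cA p q v ≠ 0 ∧ cB p q v ≠ 0 := by
  constructor
  · rintro ⟨h1, h2⟩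
    refine ⟨h1, ?_, ?_⟩
    · intro hA
      exact h2 (Or.inr ⟨h1, fun k hk => by
        obtain ⟨i, rfl⟩ := exists_inl p q hk
        have : cA p q v i = 0 := by rw [hA]; rfl
        exact this⟩)
    · intro hB
      exact h2 (Or.inl ⟨h1, fun k hk => by
        have hk' : p + 1 ≤ (k : ℕ) := hk
        obtain ⟨j, rfl⟩ := exists_inr p q hk'
        have : cB p q v j = 0 := by rw [hB]; rfl
        exact this⟩)
  · rintro ⟨h1, hA, hB⟩
    refine ⟨h1, ?_⟩
    rintro (⟨-, h⟩ | ⟨-, h⟩)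
    · apply hB; ext j
      exact h _ (by rw [idxE_inr]; omega)
    · apply hA; ext i
      exact h _ (by rw [idxE_inl]; exact i.isLt)

lemma cA_Dmap (p q : ℕ) (lam : ℝ) (m : ℤ) (v) :
    cA p q (Dmap (p+q+1) p lam m v) = lam ^ m • cA p q v := by
  ext i
  show (if ((idxE p q (Sum.inl i) : Fin (p+q+1+1)) : ℕ) < p + 1 then lam ^ m else lam ^ (-m)) * v _ = _
  rw [idxE_inl, if_pos i.isLt]
  rfl

lemma cB_Dmap (p q : ℕ) (lam : ℝ) (m : ℤ) (v) :
    cB p q (Dmap (p+q+1) p lam m v) = lam ^ (-m) • cB p q v := by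
  ext j
  show (if ((idxE p q (Sum.inr j) : Fin (p+q+1+1)) : ℕ) < p + 1 then lam ^ m else lam ^ (-m)) * v _ = _
  rw [idxE_inr, if_neg (by omega)]
  rfl

lemma cA_smul (p q : ℕ) (c : ℝ) (v) : cA p q (c • v) = c • cA p q v := rfl
lemma cB_smul (p q : ℕ) (c : ℝ) (v) : cB p q (c • v) = c • cB p q v := rfl

section Facts

variable {p q : ℕ} {lam : ℝ}

lemma hl0 {lam : ℝ} (hlam : 1 < lam) : (0:ℝ) < lam := lt_trans one_pos hlam

lemma norm_Dmap_pos (hlam : 1 < lam) (m : ℤ) {v : EuclideanSpace ℝ (Fin (p+q+1+1))}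
    (hA : cA p q v ≠ 0) :
    0 < ‖Dmap (p+q+1) p lam m v‖ := by
  have h2 : ‖Dmap (p+q+1) p lam m v‖ ^ 2 =
      ‖lam ^ m • cA p q v‖ ^ 2 + ‖lam ^ (-m) • cB p q v‖ ^ 2 := by
    rw [sq_norm_split, cA_Dmap, cB_Dmap]
  have hlam0 : (0:ℝ) < lam := hl0 hlam
  have hposA : 0 < ‖lam ^ m • cA p q v‖ := by
    rw [norm_smul]
    exact mul_pos (norm_pos_iff.mpr (ne_of_gt (zpow_pos hlam0 m))) (norm_pos_iff.mpr hA)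
  have hsq : 0 < ‖Dmap (p+q+1) p lam m v‖ ^ 2 := by
    have : (0:ℝ) ≤ ‖lam ^ (-m) • cB p q v‖ ^ 2 := by positivity
    rw [h2]; nlinarith [hposA]
  nlinarith [norm_nonneg (Dmap (p+q+1) p lam m v), hsq]

lemma cA_normAct (m : ℤ) (v : EuclideanSpace ℝ (Fin (p+q+1+1))) :
    cA p q (normAct (p+q+1) p lam m v) =
      (‖Dmap (p+q+1) p lam m v‖⁻¹ * lam ^ m) • cA p q v := by
  rw [normAct, cA_smul, cA_Dmap, smul_smul]

lemma cB_normAct (m : ℤ) (v : EuclideanSpace ℝ (Fin (p+q+1+1))) :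
    cB p q (normAct (p+q+1) p lam m v) =
      (‖Dmap (p+q+1) p lam m v‖⁻¹ * lam ^ (-m)) • cB p q v := by
  rw [normAct, cB_smul, cB_Dmap, smul_smul]

lemma norm_normAct (hlam : 1 < lam) (m : ℤ) {v : EuclideanSpace ℝ (Fin (p+q+1+1))}
    (hA : cA p q v ≠ 0) :
    ‖normAct (p+q+1) p lam m v‖ = 1 := by
  have hN := norm_Dmap_pos hlam m hA
  rw [normAct, norm_smul, norm_inv, norm_norm, inv_mul_cancel₀ (ne_of_gt hN)]

lemma normAct_mem_Omega (hlam : 1 < lam) (m : ℤ) {v : EuclideanSpace ℝ (Fin (p+q+1+1))}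
    (hv : v ∈ Omega (p+q+1) p) : normAct (p+q+1) p lam m v ∈ Omega (p+q+1) p := by
  obtain ⟨h1, hA, hB⟩ := (mem_Omega_iff p q v).mp hv
  have hN := norm_Dmap_pos hlam m hA
  have hlam0 : (0:ℝ) < lam := hl0 hlam
  refine (mem_Omega_iff p q _).mpr ⟨norm_normAct hlam m hA, ?_, ?_⟩
  · rw [cA_normAct]
    have : (0:ℝ) < lam ^ m := zpow_pos hlam0 m
    exact smul_ne_zero (by positivity) hA
  · rw [cB_normAct]
    have : (0:ℝ) < lam ^ (-m) := zpow_pos hlam0 (-m)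
    exact smul_ne_zero (by positivity) hB

/-- unit direction of a positive multiple -/
lemma unit_smul {E : Type*} [NormedAddCommGroup E] [NormedSpace ℝ E]
    {c : ℝ} (hc : 0 < c) {a : E} (ha : a ≠ 0) :
    ‖c • a‖⁻¹ • (c • a) = ‖a‖⁻¹ • a := by
  have hna : (0:ℝ) < ‖a‖ := norm_pos_iff.mpr ha
  rw [norm_smul, Real.norm_eq_abs, abs_of_pos hc, smul_smul]
  congr 1
  field_simp

def tOf (p q : ℕ) (lam : ℝ) (v : EuclideanSpace ℝ (Fin (p+q+1+1))) : ℝ :=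
  Real.log (‖cA p q v‖ / ‖cB p q v‖) / (2 * Real.log lam)

lemma tOf_eq (v : EuclideanSpace ℝ (Fin (p+q+1+1))) (hA : cA p q v ≠ 0) (hB : cB p q v ≠ 0) :
    tOf p q lam v = (Real.log ‖cA p q v‖ - Real.log ‖cB p q v‖) / (2 * Real.log lam) := by
  rw [tOf, Real.log_div (by simpa using hA) (by simpa using hB)]

lemma tOf_normAct (hlam : 1 < lam) (m : ℤ) {v : EuclideanSpace ℝ (Fin (p+q+1+1))}
    (hA : cA p q v ≠ 0) (hB : cB p q v ≠ 0) :
    tOf p q lam (normAct (p+q+1) p lam m v) = tOf p q lam v + m := by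
  have hN := norm_Dmap_pos hlam m hA
  have hlog : Real.log lam ≠ 0 := ne_of_gt (Real.log_pos hlam)
  have hlam0 : (0:ℝ) < lam := hl0 hlam
  have hA' : (0:ℝ) < ‖cA p q v‖ := norm_pos_iff.mpr hA
  have hB' : (0:ℝ) < ‖cB p q v‖ := norm_pos_iff.mpr hB
  have hcApos : (0:ℝ) < ‖Dmap (p+q+1) p lam m v‖⁻¹ * lam ^ m := by
    have : (0:ℝ) < lam ^ m := zpow_pos hlam0 m
    positivity
  have hcBpos : (0:ℝ) < ‖Dmap (p+q+1) p lam m v‖⁻¹ * lam ^ (-m) := by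
    have : (0:ℝ) < lam ^ (-m) := zpow_pos hlam0 (-m)
    positivity
  have e1 : ‖cA p q (normAct (p+q+1) p lam m v)‖ =
      (‖Dmap (p+q+1) p lam m v‖⁻¹ * lam ^ m) * ‖cA p q v‖ := by
    rw [cA_normAct, norm_smul, Real.norm_eq_abs, abs_of_pos hcApos]
  have e2 : ‖cB p q (normAct (p+q+1) p lam m v)‖ =
      (‖Dmap (p+q+1) p lam m v‖⁻¹ * lam ^ (-m)) * ‖cB p q v‖ := by
    rw [cB_normAct, norm_smul, Real.norm_eq_abs, abs_of_pos hcBpos]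
  have hA2 : cA p q (normAct (p+q+1) p lam m v) ≠ 0 := by
    rw [cA_normAct]; exact smul_ne_zero (ne_of_gt hcApos) hA
  have hB2 : cB p q (normAct (p+q+1) p lam m v) ≠ 0 := by
    rw [cB_normAct]; exact smul_ne_zero (ne_of_gt hcBpos) hB
  rw [tOf_eq _ hA2 hB2, tOf_eq v hA hB, e1, e2]
  rw [Real.log_mul (ne_of_gt hcApos) (ne_of_gt hA'),
      Real.log_mul (ne_of_gt hcBpos) (ne_of_gt hB'),
      Real.log_mul (ne_of_gt (inv_pos.mpr hN)) (ne_of_gt (zpow_pos hlam0 m)),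
      Real.log_mul (ne_of_gt (inv_pos.mpr hN)) (ne_of_gt (zpow_pos hlam0 (-m))),
      Real.log_zpow, Real.log_zpow]
  push_cast
  field_simp
  ring

lemma rs_unique {r s r' s' : ℝ} (hr : 0 < r) (hs : 0 < s) (hr' : 0 < r') (hs' : 0 < s')
    (h1 : r ^ 2 + s ^ 2 = 1) (h2 : r' ^ 2 + s' ^ 2 = 1) (hrat : r / s = r' / s') :
    r = r' ∧ s = s' := by
  have h3 : r * s' = r' * s := by
    field_simp at hrat; linarith
  have h4 : (r * s') ^ 2 = (r' * s) ^ 2 := by rw [h3]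
  have hs2 : s ^ 2 = s' ^ 2 := by linear_combination s' ^ 2 * h1 - s ^ 2 * h2 - h4
  have hss : s = s' := by
    calc s = Real.sqrt (s ^ 2) := (Real.sqrt_sq hs.le).symm
    _ = Real.sqrt (s' ^ 2) := by rw [hs2]
    _ = s' := Real.sqrt_sq hs'.le
  refine ⟨?_, hss⟩
  rw [hss] at h3
  exact mul_right_cancel₀ (ne_of_gt hs') h3

end Facts

section Inv

variable {p q : ℕ} {lam : ℝ}

def cOf (lam t : ℝ) : ℝ := Real.exp (2 * t * Real.log lam)

def rOf (lam t : ℝ) : ℝ := cOf lam t / Real.sqrt (1 + cOf lam t ^ 2)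

def sOf (lam t : ℝ) : ℝ := 1 / Real.sqrt (1 + cOf lam t ^ 2)

lemma cOf_pos (lam t : ℝ) : 0 < cOf lam t := Real.exp_pos _

lemma sqrt_pos' (lam t : ℝ) : 0 < Real.sqrt (1 + cOf lam t ^ 2) :=
  Real.sqrt_pos.mpr (by positivity)

lemma rOf_pos (lam t : ℝ) : 0 < rOf lam t := div_pos (cOf_pos lam t) (sqrt_pos' lam t)

lemma sOf_pos (lam t : ℝ) : 0 < sOf lam t := div_pos one_pos (sqrt_pos' lam t)

lemma rs_sq (lam t : ℝ) : rOf lam t ^ 2 + sOf lam t ^ 2 = 1 := by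
  have h : Real.sqrt (1 + cOf lam t ^ 2) ^ 2 = 1 + cOf lam t ^ 2 :=
    Real.sq_sqrt (by positivity)
  have hne : Real.sqrt (1 + cOf lam t ^ 2) ≠ 0 := ne_of_gt (sqrt_pos' lam t)
  rw [rOf, sOf, div_pow, div_pow, h]
  field_simp
  ring

lemma rs_ratio (lam t : ℝ) : rOf lam t / sOf lam t = cOf lam t := by
  have hne : Real.sqrt (1 + cOf lam t ^ 2) ≠ 0 := ne_of_gt (sqrt_pos' lam t)
  rw [rOf, sOf]
  field_simp

lemma log_cOf (hlam : 1 < lam) (t : ℝ) :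
    Real.log (cOf lam t) / (2 * Real.log lam) = t := by
  have hlog : Real.log lam ≠ 0 := ne_of_gt (Real.log_pos hlam)
  rw [cOf, Real.log_exp]
  field_simp

def vecOf (p q : ℕ) (lam : ℝ) (u : EuclideanSpace ℝ (Fin (p + 1)))
    (w : EuclideanSpace ℝ (Fin (q + 1))) (t : ℝ) : EuclideanSpace ℝ (Fin (p+q+1+1)) :=
  glue p q (rOf lam t • u) (sOf lam t • w)

lemma cA_vecOf (u w) (t : ℝ) : cA p q (vecOf p q lam u w t) = rOf lam t • u := cA_glue p q _ _
lemma cB_vecOf (u w) (t : ℝ) : cB p q (vecOf p q lam u w t) = sOf lam t • w := cB_glue p q _ _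

lemma norm_cA_vecOf {u : EuclideanSpace ℝ (Fin (p + 1))} (hu : ‖u‖ = 1) (w) (t : ℝ) :
    ‖cA p q (vecOf p q lam u w t)‖ = rOf lam t := by
  rw [cA_vecOf, norm_smul, Real.norm_eq_abs, abs_of_pos (rOf_pos lam t), hu, mul_one]

lemma norm_cB_vecOf (u) {w : EuclideanSpace ℝ (Fin (q + 1))} (hw : ‖w‖ = 1) (t : ℝ) :
    ‖cB p q (vecOf p q lam u w t)‖ = sOf lam t := by
  rw [cB_vecOf, norm_smul, Real.norm_eq_abs, abs_of_pos (sOf_pos lam t), hw, mul_one]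

lemma vecOf_mem_Omega {u : EuclideanSpace ℝ (Fin (p + 1))} {w : EuclideanSpace ℝ (Fin (q + 1))}
    (hu : ‖u‖ = 1) (hw : ‖w‖ = 1) (t : ℝ) :
    vecOf p q lam u w t ∈ Omega (p+q+1) p := by
  refine (mem_Omega_iff p q _).mpr ⟨?_, ?_, ?_⟩
  · have h2 : ‖vecOf p q lam u w t‖ ^ 2 = 1 := by
      rw [sq_norm_split, norm_cA_vecOf hu w t, norm_cB_vecOf u hw t, rs_sq]
    nlinarith [norm_nonneg (vecOf p q lam u w t)]
  · rw [cA_vecOf]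
    exact smul_ne_zero (ne_of_gt (rOf_pos lam t)) (by simp [← norm_pos_iff, hu])
  · rw [cB_vecOf]
    exact smul_ne_zero (ne_of_gt (sOf_pos lam t)) (by simp [← norm_pos_iff, hw])

lemma tOf_vecOf (hlam : 1 < lam) {u : EuclideanSpace ℝ (Fin (p + 1))}
    {w : EuclideanSpace ℝ (Fin (q + 1))} (hu : ‖u‖ = 1) (hw : ‖w‖ = 1) (t : ℝ) :
    tOf p q lam (vecOf p q lam u w t) = t := by
  rw [tOf, norm_cA_vecOf hu w t, norm_cB_vecOf u hw t, rs_ratio, log_cOf hlam]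

/-- reconstruction: `vecOf` of the data of `v` returns `v`. -/
lemma vecOf_tOf (hlam : 1 < lam) {v : EuclideanSpace ℝ (Fin (p+q+1+1))}
    (hv : v ∈ Omega (p+q+1) p) :
    vecOf p q lam (‖cA p q v‖⁻¹ • cA p q v) (‖cB p q v‖⁻¹ • cB p q v) (tOf p q lam v) = v := by
  obtain ⟨h1, hA, hB⟩ := (mem_Omega_iff p q v).mp hv
  have hA' : (0:ℝ) < ‖cA p q v‖ := norm_pos_iff.mpr hA
  have hB' : (0:ℝ) < ‖cB p q v‖ := norm_pos_iff.mpr hB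
  have hlog : Real.log lam ≠ 0 := ne_of_gt (Real.log_pos hlam)
  have hsum : ‖cA p q v‖ ^ 2 + ‖cB p q v‖ ^ 2 = 1 := by
    rw [← sq_norm_split, h1]; norm_num
  have hc : cOf lam (tOf p q lam v) = ‖cA p q v‖ / ‖cB p q v‖ := by
    rw [cOf, tOf]
    have : 2 * (Real.log (‖cA p q v‖ / ‖cB p q v‖) / (2 * Real.log lam)) * Real.log lam =
        Real.log (‖cA p q v‖ / ‖cB p q v‖) := by field_simp
    rw [this, Real.exp_log (div_pos hA' hB')]
  have hr : rOf lam (tOf p q lam v) = ‖cA p q v‖ ∧ sOf lam (tOf p q lam v) = ‖cB p q v‖ := by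
    apply rs_unique (rOf_pos _ _) (sOf_pos _ _) hA' hB' (rs_sq _ _) hsum
    rw [rs_ratio, hc]
  rw [vecOf, hr.1, hr.2, smul_smul, smul_smul,
    mul_inv_cancel₀ (ne_of_gt hA'), mul_inv_cancel₀ (ne_of_gt hB'), one_smul, one_smul]
  exact glue_cAB p q v

end Inv

section Quot

variable (p q : ℕ) (lam : ℝ)

lemma unit_mem_sphere {E : Type*} [NormedAddCommGroup E] [NormedSpace ℝ E]
    {a : E} (ha : a ≠ 0) : ‖a‖⁻¹ • a ∈ Metric.sphere (0 : E) 1 := by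
  rw [mem_sphere_zero_iff_norm, norm_smul, norm_inv, norm_norm,
    inv_mul_cancel₀ (by simpa using ha)]

def Tsp (p q : ℕ) : Type :=
  (Metric.sphere (0 : EuclideanSpace ℝ (Fin (p + 1))) 1) ×
    (Metric.sphere (0 : EuclideanSpace ℝ (Fin (q + 1))) 1) × AddCircle (1 : ℝ)

instance : TopologicalSpace (Tsp p q) := instTopologicalSpaceProd
instance : CompactSpace (Tsp p q) := by unfold Tsp; infer_instance
instance : T2Space (Tsp p q) := by unfold Tsp; infer_instance

def Phi (v : ↥(Omega (p+q+1) p)) : Tsp p q :=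
  ⟨⟨‖cA p q v.1‖⁻¹ • cA p q v.1, unit_mem_sphere (((mem_Omega_iff p q v.1).mp v.2).2.1)⟩,
   ⟨‖cB p q v.1‖⁻¹ • cB p q v.1, unit_mem_sphere (((mem_Omega_iff p q v.1).mp v.2).2.2)⟩,
   ((tOf p q lam v.1 : ℝ) : AddCircle (1:ℝ))⟩

lemma coe_add_int (t : ℝ) (m : ℤ) : ((t + (m:ℝ) : ℝ) : AddCircle (1:ℝ)) = (t : AddCircle (1:ℝ)) := by
  apply (QuotientAddGroup.eq).mpr
  refine AddSubgroup.mem_zmultiples_iff.mpr ⟨-m, ?_⟩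
  simp [zsmul_eq_mul]

lemma Phi_sound (hlam : 1 < lam) : ∀ v w, orbitRel (p+q+1) p lam v w →
    Phi p q lam v = Phi p q lam w := by
  rintro ⟨v, hv⟩ ⟨w, hw⟩ ⟨m, hm⟩
  obtain ⟨h1, hA, hB⟩ := (mem_Omega_iff p q v).mp hv
  have hm' : normAct (p+q+1) p lam m v = w := hm
  obtain rfl : w = normAct (p+q+1) p lam m v := hm'.symm
  have hN := norm_Dmap_pos hlam m hA
  have hlam0 : (0:ℝ) < lam := hl0 hlam
  have hposA : (0:ℝ) < ‖Dmap (p+q+1) p lam m v‖⁻¹ * lam ^ m := by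
    have : (0:ℝ) < lam ^ m := zpow_pos hlam0 m
    positivity
  have hposB : (0:ℝ) < ‖Dmap (p+q+1) p lam m v‖⁻¹ * lam ^ (-m) := by
    have : (0:ℝ) < lam ^ (-m) := zpow_pos hlam0 (-m)
    positivity
  refine Prod.ext ?_ (Prod.ext ?_ ?_)
  · apply Subtype.ext
    show ‖cA p q v‖⁻¹ • cA p q v = ‖cA p q (normAct (p+q+1) p lam m v)‖⁻¹ •
      cA p q (normAct (p+q+1) p lam m v)
    rw [cA_normAct, unit_smul hposA hA]
  · apply Subtype.ext
    show ‖cB p q v‖⁻¹ • cB p q v = ‖cB p q (normAct (p+q+1) p lam m v)‖⁻¹ •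
      cB p q (normAct (p+q+1) p lam m v)
    rw [cB_normAct, unit_smul hposB hB]
  · show ((tOf p q lam v : ℝ) : AddCircle (1:ℝ)) = _
    have : tOf p q lam (normAct (p+q+1) p lam m v) = tOf p q lam v + m :=
      tOf_normAct hlam m hA hB
    show _ = ((tOf p q lam (normAct (p+q+1) p lam m v) : ℝ) : AddCircle (1:ℝ))
    rw [this, coe_add_int]

lemma eq_of_data (hlam : 1 < lam) {v w : EuclideanSpace ℝ (Fin (p+q+1+1))}
    (hv : v ∈ Omega (p+q+1) p) (hw : w ∈ Omega (p+q+1) p)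
    (h1 : ‖cA p q v‖⁻¹ • cA p q v = ‖cA p q w‖⁻¹ • cA p q w)
    (h2 : ‖cB p q v‖⁻¹ • cB p q v = ‖cB p q w‖⁻¹ • cB p q w)
    (h3 : tOf p q lam v = tOf p q lam w) : v = w := by
  calc v = vecOf p q lam (‖cA p q v‖⁻¹ • cA p q v) (‖cB p q v‖⁻¹ • cB p q v) (tOf p q lam v) :=
        (vecOf_tOf hlam hv).symm
  _ = vecOf p q lam (‖cA p q w‖⁻¹ • cA p q w) (‖cB p q w‖⁻¹ • cB p q w) (tOf p q lam w) := by
        rw [h1, h2, h3]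
  _ = w := vecOf_tOf hlam hw

lemma vecOf_add_int (hlam : 1 < lam) {u : EuclideanSpace ℝ (Fin (p + 1))}
    {w : EuclideanSpace ℝ (Fin (q + 1))} (hu : ‖u‖ = 1) (hw : ‖w‖ = 1) (t : ℝ) (m : ℤ) :
    normAct (p+q+1) p lam m (vecOf p q lam u w t) = vecOf p q lam u w (t + m) := by
  have hu0 : u ≠ 0 := by intro h; rw [h] at hu; simp at hu
  have hw0 : w ≠ 0 := by intro h; rw [h] at hw; simp at hw
  have hmem := vecOf_mem_Omega (p := p) (q := q) (lam := lam) hu hw t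
  obtain ⟨-, hA, hB⟩ := (mem_Omega_iff p q _).mp hmem
  have hN := norm_Dmap_pos hlam m hA
  have hlam0 : (0:ℝ) < lam := hl0 hlam
  have hposA : (0:ℝ) < ‖Dmap (p+q+1) p lam m (vecOf p q lam u w t)‖⁻¹ * lam ^ m := by
    have : (0:ℝ) < lam ^ m := zpow_pos hlam0 m
    positivity
  have hposB : (0:ℝ) < ‖Dmap (p+q+1) p lam m (vecOf p q lam u w t)‖⁻¹ * lam ^ (-m) := by
    have : (0:ℝ) < lam ^ (-m) := zpow_pos hlam0 (-m)
    positivity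
  apply eq_of_data p q lam hlam (normAct_mem_Omega hlam m hmem) (vecOf_mem_Omega hu hw (t+m))
  · rw [cA_normAct, unit_smul hposA hA, cA_vecOf, cA_vecOf,
      unit_smul (rOf_pos lam t) hu0, unit_smul (rOf_pos lam (t+m)) hu0]
  · rw [cB_normAct, unit_smul hposB hB, cB_vecOf, cB_vecOf,
      unit_smul (sOf_pos lam t) hw0, unit_smul (sOf_pos lam (t+m)) hw0]
  · rw [tOf_normAct hlam m hA hB, tOf_vecOf hlam hu hw, tOf_vecOf hlam hu hw]

def GofReal (u : Metric.sphere (0 : EuclideanSpace ℝ (Fin (p + 1))) 1)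
    (w : Metric.sphere (0 : EuclideanSpace ℝ (Fin (q + 1))) 1) (t : ℝ) :
    Quot (orbitRel (p+q+1) p lam) :=
  Quot.mk _ ⟨vecOf p q lam u.1 w.1 t,
    vecOf_mem_Omega (mem_sphere_zero_iff_norm.mp u.2) (mem_sphere_zero_iff_norm.mp w.2) t⟩

lemma GofReal_sound (hlam : 1 < lam) (u w) {t t' : ℝ}
    (h : (QuotientAddGroup.leftRel (AddSubgroup.zmultiples (1:ℝ))) t t') :
    GofReal p q lam u w t = GofReal p q lam u w t' := by
  rw [QuotientAddGroup.leftRel_apply] at h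
  obtain ⟨m, hm⟩ := AddSubgroup.mem_zmultiples_iff.mp h
  have hm' : (m : ℝ) = -t + t' := by simpa [zsmul_eq_mul] using hm
  have ht' : t' = t + m := by linarith
  subst ht'
  exact Quot.sound ⟨m, vecOf_add_int p q lam hlam
    (mem_sphere_zero_iff_norm.mp u.2) (mem_sphere_zero_iff_norm.mp w.2) t m⟩

def Gfun (hlam : 1 < lam) (x : Tsp p q) : Quot (orbitRel (p+q+1) p lam) :=
  Quotient.liftOn' x.2.2 (GofReal p q lam x.1 x.2.1)
    (fun _ _ h => GofReal_sound p q lam hlam x.1 x.2.1 h)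

def Fquot (hlam : 1 < lam) : Quot (orbitRel (p+q+1) p lam) → Tsp p q :=
  Quot.lift (Phi p q lam) (Phi_sound p q lam hlam)

end Quot

section Cont

variable (p q : ℕ) (lam : ℝ)

lemma continuous_cA : Continuous (cA p q) := by
  have h1 : Continuous fun (v : ∀ _ : Fin (p+q+1+1), ℝ) =>
      fun i : Fin (p+1) => v (idxE p q (Sum.inl i)) :=
    continuous_pi fun i => continuous_apply _
  exact (PiLp.continuous_toLp (p := 2) (β := fun _ : Fin (p+1) => ℝ)).comp
    (h1.comp (PiLp.continuous_ofLp (p := 2) (β := fun _ : Fin (p+q+1+1) => ℝ)))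

lemma continuous_cB : Continuous (cB p q) := by
  have h1 : Continuous fun (v : ∀ _ : Fin (p+q+1+1), ℝ) =>
      fun j : Fin (q+1) => v (idxE p q (Sum.inr j)) :=
    continuous_pi fun j => continuous_apply _
  exact (PiLp.continuous_toLp (p := 2) (β := fun _ : Fin (q+1) => ℝ)).comp
    (h1.comp (PiLp.continuous_ofLp (p := 2) (β := fun _ : Fin (p+q+1+1) => ℝ)))

lemma continuous_glue :
    Continuous fun ab : EuclideanSpace ℝ (Fin (p+1)) × EuclideanSpace ℝ (Fin (q+1)) =>
      glue p q ab.1 ab.2 := by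
  have key : ∀ x : Fin (p+1) ⊕ Fin (q+1),
      Continuous fun ab : EuclideanSpace ℝ (Fin (p+1)) × EuclideanSpace ℝ (Fin (q+1)) =>
        Sum.elim ab.1 ab.2 x := by
    rintro (i | j)
    · exact (continuous_apply i).comp
        ((PiLp.continuous_ofLp (p := 2) (β := fun _ : Fin (p+1) => ℝ)).comp continuous_fst)
    · exact (continuous_apply j).comp
        ((PiLp.continuous_ofLp (p := 2) (β := fun _ : Fin (q+1) => ℝ)).comp continuous_snd)
  exact (PiLp.continuous_toLp (p := 2) (β := fun _ : Fin (p+q+1+1) => ℝ)).comp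
    (continuous_pi fun k => key ((idxE p q).symm k))

lemma continuous_Phi (hlam : 1 < lam) : Continuous (Phi p q lam) := by
  have hA : Continuous fun v : ↥(Omega (p+q+1) p) => cA p q v.1 :=
    (continuous_cA p q).comp continuous_subtype_val
  have hB : Continuous fun v : ↥(Omega (p+q+1) p) => cB p q v.1 :=
    (continuous_cB p q).comp continuous_subtype_val
  have hAne : ∀ v : ↥(Omega (p+q+1) p), ‖cA p q v.1‖ ≠ 0 := fun v =>
    ne_of_gt (norm_pos_iff.mpr ((mem_Omega_iff p q v.1).mp v.2).2.1)
  have hBne : ∀ v : ↥(Omega (p+q+1) p), ‖cB p q v.1‖ ≠ 0 := fun v =>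
    ne_of_gt (norm_pos_iff.mpr ((mem_Omega_iff p q v.1).mp v.2).2.2)
  refine Continuous.prodMk ?_ (Continuous.prodMk ?_ ?_)
  · exact Continuous.subtype_mk ((hA.norm.inv₀ hAne).smul hA) _
  · exact Continuous.subtype_mk ((hB.norm.inv₀ hBne).smul hB) _
  · have ht : Continuous fun v : ↥(Omega (p+q+1) p) => tOf p q lam v.1 := by
      have hr : Continuous fun v : ↥(Omega (p+q+1) p) => ‖cA p q v.1‖ / ‖cB p q v.1‖ :=
        hA.norm.div hB.norm hBne
      have hrne : ∀ v : ↥(Omega (p+q+1) p), ‖cA p q v.1‖ / ‖cB p q v.1‖ ≠ 0 := fun v =>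
        div_ne_zero (hAne v) (hBne v)
      exact (hr.log hrne).div_const _
    exact continuous_quotient_mk'.comp ht

lemma continuous_rOf : Continuous (rOf lam) := by
  have hc : Continuous (cOf lam) := Real.continuous_exp.comp (by continuity)
  have hd : Continuous fun t => Real.sqrt (1 + cOf lam t ^ 2) :=
    Real.continuous_sqrt.comp (by continuity)
  exact hc.div hd fun t => ne_of_gt (sqrt_pos' lam t)

lemma continuous_sOf : Continuous (sOf lam) := by
  have hc : Continuous (cOf lam) := Real.continuous_exp.comp (by continuity)
  have hd : Continuous fun t => Real.sqrt (1 + cOf lam t ^ 2) :=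
    Real.continuous_sqrt.comp (by continuity)
  exact continuous_const.div hd fun t => ne_of_gt (sqrt_pos' lam t)

lemma continuous_Fquot (hlam : 1 < lam) : Continuous (Fquot p q lam hlam) :=
  continuous_quot_lift _ (continuous_Phi p q lam hlam)

lemma continuous_Gfun (hlam : 1 < lam) : Continuous (Gfun p q lam hlam) := by
  have hπ : IsOpenQuotientMap
      (Prod.map (id : Metric.sphere (0 : EuclideanSpace ℝ (Fin (p + 1))) 1 → _)
        (Prod.map (id : Metric.sphere (0 : EuclideanSpace ℝ (Fin (q + 1))) 1 → _)
          (QuotientAddGroup.mk : ℝ → AddCircle (1:ℝ)))) :=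
    IsOpenQuotientMap.id.prodMap
      (IsOpenQuotientMap.id.prodMap QuotientAddGroup.isOpenQuotientMap_mk)
  refine (hπ.isQuotientMap.continuous_iff).mpr ?_
  have heq : (Gfun p q lam hlam ∘ (Prod.map id (Prod.map id (QuotientAddGroup.mk)))) =
      fun x : (Metric.sphere (0 : EuclideanSpace ℝ (Fin (p + 1))) 1) ×
        (Metric.sphere (0 : EuclideanSpace ℝ (Fin (q + 1))) 1) × ℝ =>
        GofReal p q lam x.1 x.2.1 x.2.2 := rfl
  erw [heq]
  have hvec : Continuous fun x : (Metric.sphere (0 : EuclideanSpace ℝ (Fin (p + 1))) 1) ×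
      (Metric.sphere (0 : EuclideanSpace ℝ (Fin (q + 1))) 1) × ℝ =>
      vecOf p q lam x.1.1 x.2.1.1 x.2.2 := by
    have h1 : Continuous fun x : (Metric.sphere (0 : EuclideanSpace ℝ (Fin (p + 1))) 1) ×
        (Metric.sphere (0 : EuclideanSpace ℝ (Fin (q + 1))) 1) × ℝ =>
        (rOf lam x.2.2 • (x.1.1 : EuclideanSpace ℝ (Fin (p+1))),
         sOf lam x.2.2 • (x.2.1.1 : EuclideanSpace ℝ (Fin (q+1)))) := by
      refine Continuous.prodMk ?_ ?_
      · exact ((continuous_rOf lam).comp (continuous_snd.comp continuous_snd)).smul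
          (continuous_subtype_val.comp continuous_fst)
      · exact ((continuous_sOf lam).comp (continuous_snd.comp continuous_snd)).smul
          (continuous_subtype_val.comp (continuous_fst.comp continuous_snd))
    exact (continuous_glue p q).comp h1
  exact continuous_quot_mk.comp (hvec.subtype_mk _)

end Cont

theorem main' (p q : ℕ) (lam : ℝ) (hlam : 1 < lam) :
    Nonempty (Quot (orbitRel (p+q+1) p lam) ≃ₜ
      (Metric.sphere (0 : EuclideanSpace ℝ (Fin (p + 1))) 1) ×
        (Metric.sphere (0 : EuclideanSpace ℝ (Fin (q + 1))) 1) ×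
          AddCircle (1 : ℝ)) ∧
    CompactSpace (Quot (orbitRel (p+q+1) p lam)) ∧
    T2Space (Quot (orbitRel (p+q+1) p lam)) := by
  have hFcont := continuous_Fquot p q lam hlam
  have hGcont := continuous_Gfun p q lam hlam
  have left_inv : ∀ x, Fquot p q lam hlam (Gfun p q lam hlam x) = x := by
    rintro ⟨u, w, θ⟩
    induction θ using Quotient.inductionOn' with
    | h t =>
      have hu : ‖(u : EuclideanSpace ℝ (Fin (p+1)))‖ = 1 := mem_sphere_zero_iff_norm.mp u.2
      have hw : ‖(w : EuclideanSpace ℝ (Fin (q+1)))‖ = 1 := mem_sphere_zero_iff_norm.mp w.2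
      have hu0 : (u : EuclideanSpace ℝ (Fin (p+1))) ≠ 0 := by
        intro h; rw [h] at hu; simp at hu
      have hw0 : (w : EuclideanSpace ℝ (Fin (q+1))) ≠ 0 := by
        intro h; rw [h] at hw; simp at hw
      show Phi p q lam _ = (u, w, Quotient.mk'' t)
      refine Prod.ext ?_ (Prod.ext ?_ ?_)
      · apply Subtype.ext
        show ‖cA p q (vecOf p q lam u.1 w.1 t)‖⁻¹ • cA p q (vecOf p q lam u.1 w.1 t) = u.1
        rw [cA_vecOf, unit_smul (rOf_pos lam t) hu0, hu, inv_one, one_smul]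
      · apply Subtype.ext
        show ‖cB p q (vecOf p q lam u.1 w.1 t)‖⁻¹ • cB p q (vecOf p q lam u.1 w.1 t) = w.1
        rw [cB_vecOf, unit_smul (sOf_pos lam t) hw0, hw, inv_one, one_smul]
      · show ((tOf p q lam (vecOf p q lam u.1 w.1 t) : ℝ) : AddCircle (1:ℝ)) = Quotient.mk'' t
        rw [tOf_vecOf hlam hu hw]
  have right_inv : ∀ y, Gfun p q lam hlam (Fquot p q lam hlam y) = y := by
    refine Quot.ind ?_
    rintro ⟨v, hv⟩
    show GofReal p q lam _ _ (tOf p q lam v) = Quot.mk _ ⟨v, hv⟩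
    apply congrArg (Quot.mk _)
    exact Subtype.ext (vecOf_tOf hlam hv)
  let E : ((Metric.sphere (0 : EuclideanSpace ℝ (Fin (p + 1))) 1) ×
      (Metric.sphere (0 : EuclideanSpace ℝ (Fin (q + 1))) 1) × AddCircle (1:ℝ)) ≃
      Quot (orbitRel (p+q+1) p lam) :=
    ⟨Gfun p q lam hlam, Fquot p q lam hlam, left_inv, right_inv⟩
  haveI hT2 : T2Space (Quot (orbitRel (p+q+1) p lam)) := by
    refine T2Space.of_injective_continuous (f := Fquot p q lam hlam) ?_ hFcont
    exact E.symm.injective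
  haveI hCT : CompactSpace ((Metric.sphere (0 : EuclideanSpace ℝ (Fin (p + 1))) 1) ×
      (Metric.sphere (0 : EuclideanSpace ℝ (Fin (q + 1))) 1) × AddCircle (1:ℝ)) :=
    inferInstance
  have hEcont : Continuous ⇑E := hGcont
  let H := hEcont.homeoOfEquivCompactToT2
  exact ⟨⟨H.symm⟩, H.compactSpace, hT2⟩

/-- The quotient of `Ω = S^n ∖ (S^p ∪ S^q)` by the `ℤ`-action
`m • v := D_λ^m v / ‖D_λ^m v‖` is homeomorphic to `S^p × S^q × (ℝ/ℤ)`;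
in particular it is a compact Hausdorff space. -/
theorem quotient_homeomorph_prod_addCircle
    (p q : ℕ) (hp : 1 ≤ p) (hq : 1 ≤ q) (n : ℕ) (hn : n = p + q + 1)
    (lam : ℝ) (hlam : 1 < lam) :
    Nonempty (Quot (orbitRel n p lam) ≃ₜ
      (Metric.sphere (0 : EuclideanSpace ℝ (Fin (p + 1))) 1) ×
        (Metric.sphere (0 : EuclideanSpace ℝ (Fin (q + 1))) 1) ×
          AddCircle (1 : ℝ)) ∧
    CompactSpace (Quot (orbitRel n p lam)) ∧
    T2Space (Quot (orbitRel n p lam)) := by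
  subst hn
  exact main' p q lam hlam
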